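/- Let φ : F → G be a surjective group morphism with kernel N and F̂ the pullback of the universal covering groupoid of G along φ. The map e : F → F̂^totab given by composing u ↦ (u,1) with the universal abelianisation map is a φ-derivation, and the induced G-module morphism η : D_φ → F̂^totab from the derived module of φ is an isomorphism. -/

import Mathlib

open CategoryTheory MulOpposite

universe u v

variable {F : Type u} {G : Type v} [Group F] [Group G]

/-- The pullback `F̂` of the universal covering groupoid of `G` along `φ : F → G`:
objects the elements of `G`, morphisms the pairs `(u, g) : φ(u)g → g` with `u ∈ F`,
`g ∈ G`, composition `(u, φ(v)g)(v, g) = (uv, g)`. -/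
def PullbackCover (φ : F →* G) : Type v := G

instance (φ : F →* G) : Groupoid (PullbackCover φ) where
  Hom a b := { u : F // φ u * (show G from b) = show G from a }
  id a := ⟨1, (congrArg (· * (show G from a)) (map_one φ)).trans (one_mul _)⟩
  comp {a b c} f g := ⟨f.1 * g.1, by
    have hf := f.2; have hg := g.2
    rw [map_mul, mul_assoc, hg, hf]⟩
  id_comp f := by apply Subtype.ext; simp
  comp_id f := by apply Subtype.ext; simp
  assoc f g h := by apply Subtype.ext; simp [mul_assoc]
  inv {a b} f := ⟨f.1⁻¹, by
    have h := f.2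
    have h2 : (φ f.1)⁻¹ * (φ f.1 * (show G from b)) = show G from b :=
      inv_mul_cancel_left _ _
    rw [h, ← map_inv] at h2
    exact h2⟩
  inv_comp f := by apply Subtype.ext; simp
  comp_inv f := by apply Subtype.ext; simp

/-- A group regarded as a one-object groupoid (with `f ≫ g = f * g`,
following the composition convention of the paper). -/
def GroupAsGroupoid (A : Type*) : Type := Unit

instance (A : Type*) [Group A] : Groupoid (GroupAsGroupoid A) where
  Hom _ _ := A
  id _ := (1 : A)
  comp f g := f * g
  id_comp := one_mul
  comp_id := mul_one
  assoc := mul_assoc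
  inv f := f⁻¹
  inv_comp := inv_mul_cancel
  comp_inv := mul_inv_cancel

/-- A morphism in `GroupAsGroupoid A`, regarded as an element of the group `A`. -/
def toGrp {A : Type*} [Group A] {a b : GroupAsGroupoid A} (f : a ⟶ b) : A := f

def IsPhiDerivation {F G M : Type*} [Group F] [Group G] [AddCommGroup M]
    [DistribMulAction Gᵐᵒᵖ M] (φ : F →* G) (d : F → M) : Prop :=
  ∀ u v : F, d (u * v) = op (φ v) • d u + d v

variable (φ : F →* G)

/-- The morphism `(u, 1) : φ(u)·1 ⟶ 1` of `F̂`. -/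
def duMor (u : F) :
    (show PullbackCover φ from (φ u * 1 : G)) ⟶ (show PullbackCover φ from (1 : G)) :=
  ⟨u, rfl⟩

/-- The right action of `k ∈ G` on morphisms of `F̂`: `(u, g)^k = (u, gk)`. -/
def actMor (k : G) {a b : PullbackCover φ} (f : a ⟶ b) :
    (show PullbackCover φ from ((show G from a) * k : G)) ⟶
      (show PullbackCover φ from ((show G from b) * k : G)) :=
  ⟨f.1, by
    have h := f.2
    rw [← mul_assoc, h]⟩


section Aux

variable {T : Type (max u v)} [CommGroup T]

/-- A general morphism `(u, g) : φ(u)g ⟶ g` of `F̂`. -/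
def morUG (u : F) (g : G) :
    (show PullbackCover φ from (φ u * g : G)) ⟶ (show PullbackCover φ from g) :=
  ⟨u, rfl⟩

theorem mapval (υ : PullbackCover φ ⥤ GroupAsGroupoid T)
    {a a' b b' : PullbackCover φ} (ha : a = a') (hb : b = b')
    (f : a ⟶ b) (f' : a' ⟶ b') (h : f.1 = f'.1) :
    toGrp (υ.map f) = toGrp (υ.map f') := by
  subst ha; subst hb
  obtain rfl : f = f' := Subtype.ext h
  rfl

theorem toGrp_comp {A : Type*} [Group A] {a b c : GroupAsGroupoid A}
    (f : a ⟶ b) (g : b ⟶ c) : toGrp (f ≫ g) = toGrp f * toGrp g := rfl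

theorem toGrp_id {A : Type*} [Group A] (a : GroupAsGroupoid A) :
    toGrp (𝟙 a) = 1 := rfl

/-- Homomorphisms out of `T` agreeing on the image of `υ` are equal, by the
uniqueness part of the universal property. -/
theorem hom_ext (υ : PullbackCover φ ⥤ GroupAsGroupoid T)
    (huniv : ∀ (A : Type (max u v)) (_ : CommGroup A)
      (Φ : PullbackCover φ ⥤ GroupAsGroupoid A),
      ∃! f : T →* A, ∀ {a b : PullbackCover φ} (m : a ⟶ b),
        toGrp (Φ.map m) = f (toGrp (υ.map m)))
    {A : Type (max u v)} [iA : CommGroup A] (f1 f2 : T →* A)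
    (h : ∀ {a b : PullbackCover φ} (m : a ⟶ b),
      f1 (toGrp (υ.map m)) = f2 (toGrp (υ.map m))) : f1 = f2 := by
  let Φ : PullbackCover φ ⥤ GroupAsGroupoid A :=
    { obj := fun _ => ()
      map := fun {a b} m => (show A from f1 (toGrp (υ.map m)))
      map_id := fun a => by
        show f1 (toGrp (υ.map (𝟙 a))) = (1 : A)
        rw [υ.map_id, toGrp_id, map_one]
      map_comp := fun {a b c} m m' => by
        show f1 (toGrp (υ.map (m ≫ m'))) = _
        rw [υ.map_comp, toGrp_comp, map_mul]
        rfl }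
  obtain ⟨f, hf, hfu⟩ := huniv A iA Φ
  have h1 : f1 = f := (hfu f1 (fun {a b} m => rfl)).symm ▸ rfl
  have e1 := hfu f1 (fun {a b} m => rfl)
  have e2 := hfu f2 (fun {a b} m => h m)
  rw [e1, e2]

end Aux

/-- for a surjective `φ : F →* G` with kernel `N`, the composite
`e : F → F̂^totab` of `u ↦ (u, 1)` with the universal abelianisation map is a
`φ`-derivation, and the induced `G`-module morphism `η : D_φ → F̂^totab` from the derived
module of `φ` is an isomorphism. -/
theorem stmt16 (hφ : Function.Surjective φ)
    -- (T, υ) is the universal abelianisation of F̂: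
    (T : Type (max u v)) [CommGroup T] (υ : PullbackCover φ ⥤ GroupAsGroupoid T)
    (huniv : ∀ (A : Type (max u v)) (_ : CommGroup A)
      (Φ : PullbackCover φ ⥤ GroupAsGroupoid A),
      ∃! f : T →* A, ∀ {a b : PullbackCover φ} (m : a ⟶ b),
        toGrp (Φ.map m) = f (toGrp (υ.map m)))
    -- σ is the G-module structure on F̂^totab induced by the action of G on F̂:
    (σ : G → T →* T) (hσ1 : σ 1 = MonoidHom.id T)
    (hσmul : ∀ g k : G, σ (g * k) = (σ k).comp (σ g))
    (hσ : ∀ (k : G) {a b : PullbackCover φ} (f : a ⟶ b),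
      toGrp (υ.map (actMor φ k f)) = σ k (toGrp (υ.map f)))
    -- (D, ∂) is the derived module of φ, i.e. the universal φ-derivation:
    (D : Type (max u v)) [AddCommGroup D] [DistribMulAction Gᵐᵒᵖ D]
    (dd : F → D) (hdd : IsPhiDerivation φ dd)
    (hDuniv : ∀ (M : Type (max u v)) [AddCommGroup M] [DistribMulAction Gᵐᵒᵖ M]
      (d : F → M), IsPhiDerivation φ d →
      ∃! d' : D →+ M, (∀ (g : G) (x : D), d' (op g • x) = op g • d' x) ∧
        ∀ u : F, d' (dd u) = d u) :
    -- e is a φ-derivation (written multiplicatively in T):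
    (∀ u v : F,
      toGrp (υ.map (duMor φ (u * v)))
        = σ (φ v) (toGrp (υ.map (duMor φ u))) * toGrp (υ.map (duMor φ v))) ∧
    -- and the induced G-morphism η : D_φ → F̂^totab is an isomorphism:
    ∃ η : D ≃+ Additive T,
      (∀ u : F, η (dd u) = Additive.ofMul (toGrp (υ.map (duMor φ u)))) ∧
      (∀ (k : G) (x : D),
        η (op k • x) = Additive.ofMul (σ k (Additive.toMul (η x)))) := by
  classical
  -- abbreviation for e
  set e : F → T := fun u => toGrp (υ.map (duMor φ u)) with he
  -- Part 1: e is a φ-derivation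
  have part1 : ∀ u v : F,
      toGrp (υ.map (duMor φ (u * v)))
        = σ (φ v) (toGrp (υ.map (duMor φ u))) * toGrp (υ.map (duMor φ v)) := by
    intro u v
    have h1 : toGrp (υ.map (duMor φ (u * v)))
        = toGrp (υ.map (morUG φ u (φ v * 1) ≫ morUG φ v 1)) := by
      apply mapval
      · show (φ (u * v) * 1 : G) = φ u * (φ v * 1)
        simp [map_mul, mul_assoc]
      · rfl
      · rfl
    have h2 : toGrp (υ.map (morUG φ u (φ v * 1)))
        = σ (φ v) (toGrp (υ.map (duMor φ u))) := by
      have := hσ (φ v) (duMor φ u)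
      rw [← this]
      apply mapval
      · show (φ u * (φ v * 1) : G) = (φ u * 1) * φ v
        group
      · show (φ v * 1 : G) = 1 * φ v
        group
      · rfl
    rw [h1, υ.map_comp, toGrp_comp, h2]
    rfl
  refine ⟨part1, ?_⟩
  -- G-module structure on Additive T
  letI : SMul Gᵐᵒᵖ (Additive T) :=
    ⟨fun g x => Additive.ofMul (σ g.unop (Additive.toMul x))⟩
  have smul_def : ∀ (g : G) (x : Additive T),
      op g • x = Additive.ofMul (σ g (Additive.toMul x)) := fun _ _ => rfl
  letI : MulAction Gᵐᵒᵖ (Additive T) :=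
    { one_smul := fun x => by
        show Additive.ofMul (σ ((1 : Gᵐᵒᵖ).unop) (Additive.toMul x)) = x
        simp [hσ1]
      mul_smul := fun a b x => by
        show Additive.ofMul (σ ((a * b).unop) (Additive.toMul x)) = _
        have : (a * b).unop = b.unop * a.unop := rfl
        rw [this, hσmul]
        rfl }
  letI : DistribMulAction Gᵐᵒᵖ (Additive T) :=
    { smul_zero := fun a => by
        show Additive.ofMul (σ a.unop (Additive.toMul (0 : Additive T))) = 0
        simp
      smul_add := fun a x y => by
        show Additive.ofMul (σ a.unop (Additive.toMul (x + y))) = _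
        simp [map_mul]
        rfl }
  -- e as additive derivation
  have eDer : IsPhiDerivation φ (fun u => Additive.ofMul (e u) : F → Additive T) := by
    intro u v
    exact part1 u v
  obtain ⟨η₀, ⟨hη₀eq, hη₀e⟩, hη₀u⟩ := hDuniv (Additive T) _ eDer
  -- the functor Θ : F̂ ⥤ Multiplicative D
  have dd1 : dd 1 = 0 := by
    have := hdd 1 1
    simp only [mul_one, map_one] at this
    have h1 : op ((1 : G)) • dd 1 = dd 1 := one_smul _ _
    rw [h1] at this
    exact left_eq_add.mp this
  let Θ : PullbackCover φ ⥤ GroupAsGroupoid (Multiplicative D) :=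
    { obj := fun _ => ()
      map := fun {a b} m => Multiplicative.ofAdd (op (show G from b) • dd m.1)
      map_id := fun a => by
        show Multiplicative.ofAdd (op (show G from a) • dd (1 : F)) = 1
        simp [dd1]
      map_comp := fun {a b c} m m' => by
        show Multiplicative.ofAdd (op (show G from c) • dd (m.1 * m'.1)) = _
        have : (op (show G from c) : Gᵐᵒᵖ) • dd (m.1 * m'.1)
            = op (show G from b) • dd m.1 + op (show G from c) • dd m'.1 := by
          rw [hdd m.1 m'.1, smul_add, ← mul_smul]
          have hb : (op (show G from c) * op (φ m'.1) : Gᵐᵒᵖ)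
              = op (show G from b) := by
            rw [← op_mul, m'.2]
          rw [hb]
        rw [this]
        rfl }
  obtain ⟨η₁, hη₁, hη₁u⟩ := huniv (Multiplicative D) inferInstance Θ
  -- η₁ is equivariant
  have hη₁equiv : ∀ (g : G) (t : T),
      η₁ (σ g t) = Multiplicative.ofAdd (op g • Multiplicative.toAdd (η₁ t)) := by
    intro g
    have key : η₁.comp (σ g)
        = ((DistribMulAction.toAddMonoidHom D (op g)).toMultiplicative).comp η₁ := by
      apply hom_ext φ υ huniv
      intro a b m
      show η₁ (σ g (toGrp (υ.map m)))
        = Multiplicative.ofAdd (op g • Multiplicative.toAdd (η₁ (toGrp (υ.map m))))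
      rw [← hσ g m, ← hη₁ (actMor φ g m), ← hη₁ m]
      show Multiplicative.ofAdd (op ((show G from b) * g) • dd m.1)
        = Multiplicative.ofAdd (op g • op (show G from b) • dd m.1)
      rw [← mul_smul, ← op_mul]
    intro t
    exact DFunLike.congr_fun key t
  -- η₁ ∘ η₀ = id on D
  have left : ∀ x : D, Multiplicative.toAdd (η₁ (Additive.toMul (η₀ x))) = x := by
    let c : D →+ D :=
      (AddMonoidHom.mk' (fun t => Multiplicative.toAdd (η₁ (Additive.toMul t)))
        (fun s t => by simp [map_mul])).comp η₀
    have hc : c = AddMonoidHom.id D := by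
      obtain ⟨d', hd', hd'u⟩ := hDuniv D dd hdd
      have h1 : c = d' := by
        apply hd'u
        constructor
        · intro g x
          show Multiplicative.toAdd (η₁ (Additive.toMul (η₀ (op g • x)))) = _
          rw [hη₀eq g x, smul_def]
          simp only [toMul_ofMul]
          rw [hη₁equiv]
          rfl
        · intro u
          show Multiplicative.toAdd (η₁ (Additive.toMul (η₀ (dd u)))) = dd u
          rw [hη₀e u]
          simp only [toMul_ofMul]
          rw [he, ← hη₁ (duMor φ u)]
          show (op ((1 : G)) : Gᵐᵒᵖ) • dd u = dd u
          exact one_smul _ _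
      have h2 : AddMonoidHom.id D = d' := by
        apply hd'u
        exact ⟨fun g x => rfl, fun u => rfl⟩
      rw [h1, ← h2]
    intro x
    exact DFunLike.congr_fun hc x
  -- η₀ ∘ η₁ = id on T
  have right : ∀ t : T, Additive.toMul (η₀ (Multiplicative.toAdd (η₁ t))) = t := by
    let c : T →* T :=
      (MonoidHom.mk' (fun s => Additive.toMul (η₀ (Multiplicative.toAdd s)))
        (fun s t => by simp [map_add])).comp η₁
    have hc : c = MonoidHom.id T := by
      apply hom_ext φ υ huniv
      intro a b m
      show Additive.toMul (η₀ (Multiplicative.toAdd (η₁ (toGrp (υ.map m)))))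
        = toGrp (υ.map m)
      rw [← hη₁ m]
      show Additive.toMul (η₀ (op (show G from b) • dd m.1)) = toGrp (υ.map m)
      rw [hη₀eq, hη₀e m.1, smul_def]
      simp only [toMul_ofMul]
      rw [he, ← hσ (show G from b) (duMor φ m.1)]
      apply mapval
      · show ((φ m.1 * 1 : G) * (show G from b) : G) = show G from a
        rw [mul_one, m.2]
      · show ((1 : G) * (show G from b) : G) = show G from b
        rw [one_mul]
      · rfl
    intro t
    exact DFunLike.congr_fun hc t
  refine ⟨{ toFun := η₀
            invFun := fun t => Multiplicative.toAdd (η₁ (Additive.toMul t))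
            left_inv := left
            right_inv := right
            map_add' := map_add η₀ }, ?_, ?_⟩
  · intro u
    exact hη₀e u
  · intro k x
    exact hη₀eq k x
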